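/- For every α > 0, ε > 0 and x ∈ ℝ, the function z ↦ h_ε(z) + (z − x)²/(2α) has a unique minimizer, equal to x + α if x ≤ −α − ε, to εx/(α + ε) if |x| ≤ α + ε, and to x − α if x ≥ α + ε. -/

import Mathlib

open scoped Classical

/-- The proximal operator of the Huber function: for `α, ε > 0` and `x ∈ ℝ`, the map
`z ↦ h_ε(z) + (z − x)²/(2α)` has a unique minimizer, equal to `x + α` if
`x ≤ −α − ε`, to `εx/(α + ε)` if `|x| ≤ α + ε`, and to `x − α` if `x ≥ α + ε`. -/
theorem prox_huber (α ε x : ℝ) (hα : 0 < α) (hε : 0 < ε)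
    (hub : ℝ → ℝ)
    (hhub : ∀ t, hub t = if ε ≤ |t| then |t| - ε / 2 else t ^ 2 / (2 * ε))
    (f : ℝ → ℝ) (hf : ∀ z, f z = hub z + (z - x) ^ 2 / (2 * α))
    (m : ℝ)
    (hm : m = if x ≤ -(α + ε) then x + α
              else if α + ε ≤ x then x - α
              else ε * x / (α + ε)) :
    (∀ z, f m ≤ f z) ∧ ∀ z, (∀ w, f z ≤ f w) → z = m := by
  have hα' : (0:ℝ) < 2 * α := by linarith
  have hε' : (0:ℝ) < 2 * ε := by linarith
  have hαε : (0:ℝ) < α + ε := by linarith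
  -- Huber is above its "tangent lines": hub z ≥ |z| - ε/2
  have habs : ∀ z : ℝ, |z| - ε / 2 ≤ hub z := by
    intro z
    rw [hhub z]
    split_ifs with h
    · exact le_rfl
    · push_neg at h
      rw [le_div_iff₀ hε']
      nlinarith [sq_abs z, sq_nonneg (|z| - ε), abs_nonneg z]
  -- tangent at an interior point m with |m| ≤ ε
  have hB : ∀ m₀ : ℝ, |m₀| ≤ ε → ∀ z : ℝ,
      m₀ ^ 2 / (2 * ε) + (m₀ / ε) * (z - m₀) ≤ hub z := by
    intro m₀ hm₀ z
    rw [hhub z]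
    have hmz : m₀ * z ≤ |m₀| * |z| := by
      calc m₀ * z ≤ |m₀ * z| := le_abs_self _
        _ = |m₀| * |z| := abs_mul _ _
    split_ifs with h
    · have key2 : m₀ ^ 2 + 2 * m₀ * (z - m₀) ≤ 2 * ε * |z| - ε ^ 2 := by
        nlinarith [abs_nonneg m₀, abs_nonneg z, sq_abs m₀,
          mul_le_mul_of_nonneg_left h (abs_nonneg m₀)]
      have heq : m₀ ^ 2 / (2 * ε) + (m₀ / ε) * (z - m₀)
          = (m₀ ^ 2 + 2 * m₀ * (z - m₀)) / (2 * ε) := by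
        field_simp
      rw [heq, div_le_iff₀ hε']
      nlinarith [key2]
    · have heq : z ^ 2 / (2 * ε) - (m₀ ^ 2 / (2 * ε) + (m₀ / ε) * (z - m₀))
          = (z - m₀) ^ 2 / (2 * ε) := by
        field_simp; ring
      have hpos : (0:ℝ) ≤ (z - m₀) ^ 2 / (2 * ε) := by positivity
      linarith
  -- the key strong-convexity estimate
  have key : ∀ z : ℝ, f m + (z - m) ^ 2 / (2 * α) ≤ f z := by
    intro z
    rw [hf z, hf m]
    by_cases hx1 : x ≤ -(α + ε)
    · have hmval : m = x + α := by rw [hm, if_pos hx1]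
      subst hmval
      rw [hhub (x + α)]
      have hle : x + α ≤ -ε := by linarith
      have habs1 : ε ≤ |x + α| := by
        rw [abs_of_nonpos (by linarith)]; linarith
      rw [if_pos habs1, abs_of_nonpos (by linarith : x + α ≤ 0)]
      have h1 : -z - ε / 2 ≤ hub z := by
        have := habs z
        have := neg_abs_le z
        linarith
      have hid : ((x + α) - x) ^ 2 / (2 * α) + (z - (x + α)) ^ 2 / (2 * α)
          - (z - x) ^ 2 / (2 * α) = α - z + x := by
        field_simp; ring
      linarith
    · by_cases hx2 : α + ε ≤ x
      · have hmval : m = x - α := by rw [hm, if_neg hx1, if_pos hx2]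
        subst hmval
        rw [hhub (x - α)]
        have habs1 : ε ≤ |x - α| := by
          rw [abs_of_nonneg (by linarith)]; linarith
        rw [if_pos habs1, abs_of_nonneg (by linarith : (0:ℝ) ≤ x - α)]
        have h1 : z - ε / 2 ≤ hub z := by
          have := habs z
          have := le_abs_self z
          linarith
        have hid : ((x - α) - x) ^ 2 / (2 * α) + (z - (x - α)) ^ 2 / (2 * α)
            - (z - x) ^ 2 / (2 * α) = α + z - x := by
          field_simp; ring
        linarith
      · push_neg at hx1 hx2
        have hmval : m = ε * x / (α + ε) := by rw [hm, if_neg (by linarith), if_neg (by linarith)]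
        have hmabs : |m| < ε := by
          rw [hmval, abs_div, abs_of_pos hαε, div_lt_iff₀ hαε, abs_mul, abs_of_pos hε]
          have : |x| < α + ε := abs_lt.mpr ⟨by linarith, by linarith⟩
          nlinarith
        have h1 := hB m hmabs.le z
        rw [hhub m, if_neg (not_le.mpr hmabs)]
        have hid : (m - x) ^ 2 / (2 * α) + (z - m) ^ 2 / (2 * α)
              - (z - x) ^ 2 / (2 * α) = (m / ε) * (z - m) := by
            rw [hmval]
            field_simp
            ring
        linarith
  constructor
  · intro z
    have h1 := key z
    have h2 : (0:ℝ) ≤ (z - m) ^ 2 / (2 * α) := by positivity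
    linarith
  · intro z hz
    have h1 := hz m
    have h2 := key z
    have h3 : (z - m) ^ 2 / (2 * α) ≤ 0 := by linarith
    have h4 : (0:ℝ) ≤ (z - m) ^ 2 / (2 * α) := by positivity
    have h5 : (z - m) ^ 2 / (2 * α) = 0 := le_antisymm h3 h4
    field_simp at h5
    have h6 : z - m = 0 := (pow_eq_zero_iff two_ne_zero).mp (by linarith)
    linarith
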